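/- Let π : B₃ → SL(2,ℤ) be the surjective homomorphism with π(𝔞) = u₁₂ and π(𝔟) = u₂₁. Then the kernel of π is the subgroup of B₃ generated by 𝔠², where 𝔠 = (𝔞𝔟𝔞)² is the generator of the center of B₃. -/

import Mathlib

/-- The braid relation `aba = bab` on two generators (indexed by `Bool`,
with `true ↦ 𝔞` and `false ↦ 𝔟`). -/
def braidRels : Set (FreeGroup Bool) :=
  {FreeGroup.of true * FreeGroup.of false * FreeGroup.of true *
    (FreeGroup.of false * FreeGroup.of true * FreeGroup.of false)⁻¹}

/-- The braid group on three strands, presented by generators `𝔞, 𝔟` with the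
single relation `𝔞𝔟𝔞 = 𝔟𝔞𝔟`. -/
abbrev B3 : Type := PresentedGroup braidRels

/-- The generator `𝔞` of `B₃`. -/
def brA : B3 := PresentedGroup.of true

/-- The generator `𝔟` of `B₃`. -/
def brB : B3 := PresentedGroup.of false

/-- The generator `𝔠 = (𝔞𝔟𝔞)²` of the center of `B₃`. -/
def brC : B3 := (brA * brB * brA) ^ 2

/-- The matrix `u₁₂ = [[1,1],[0,1]]` in `SL(2,ℤ)`. -/
def u12 : Matrix.SpecialLinearGroup (Fin 2) ℤ :=
  ⟨!![1, 1; 0, 1], by norm_num [Matrix.det_fin_two_of]⟩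

/-- The matrix `u₂₁ = [[1,0],[-1,1]]` in `SL(2,ℤ)`. -/
def u21 : Matrix.SpecialLinearGroup (Fin 2) ℤ :=
  ⟨!![1, 0; -1, 1], by norm_num [Matrix.det_fin_two_of]⟩

/-! ### Auxiliary development -/

open Matrix UpperHalfPlane Monoid

section SL2

abbrev SL2Z := Matrix.SpecialLinearGroup (Fin 2) ℤ

def mS : SL2Z := ⟨!![0, 1; -1, 0], by norm_num [Matrix.det_fin_two_of]⟩
def mY : SL2Z := ⟨!![0, 1; -1, 1], by norm_num [Matrix.det_fin_two_of]⟩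
def mY2 : SL2Z := ⟨!![-1, 1; -1, 0], by norm_num [Matrix.det_fin_two_of]⟩

lemma hS : u12 * u21 * u12 = mS := by
  ext i j; fin_cases i <;> fin_cases j <;> simp [u12, u21, mS, Matrix.mul_fin_two] <;> rfl

lemma hSS : mS * mS = -1 := by
  ext i j; fin_cases i <;> fin_cases j <;> simp [mS, Matrix.mul_fin_two] <;> rfl

lemma hYY : mY * mY = mY2 := by
  ext i j; fin_cases i <;> fin_cases j <;> simp [mY, mY2, Matrix.mul_fin_two] <;> rfl

lemma hYYY : mY2 * mY = -1 := by
  ext i j; fin_cases i <;> fin_cases j <;> simp [mY, mY2, Matrix.mul_fin_two] <;> rfl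

lemma hYu : mY * u12 = mS := by
  ext i j; fin_cases i <;> fin_cases j <;> simp [mY, u12, mS, Matrix.mul_fin_two] <;> rfl

lemma huY : u21 * mY = mS := by
  ext i j; fin_cases i <;> fin_cases j <;> simp [mY, u21, mS, Matrix.mul_fin_two] <;> rfl

lemma neg_one_ne_one_SL2Z : (-1 : SL2Z) ≠ 1 := by
  intro h
  have := congrArg (fun A : SL2Z => A.1 0 0) h
  simp at this

end SL2

section PSLdef

def PN : Subgroup SL2Z := Subgroup.zpowers (-1)

lemma neg_one_mem_PN : (-1 : SL2Z) ∈ PN := ⟨1, by simp⟩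

lemma neg_one_mul_self : (-1 : SL2Z) * (-1) = 1 := by
  ext i j; simp

lemma neg_one_zpow_two : ((-1 : SL2Z) ^ (2:ℤ)) = 1 := by
  rw [zpow_two]; exact neg_one_mul_self

lemma neg_one_zpow_even (m : ℤ) : ((-1 : SL2Z) ^ (m + m)) = 1 := by
  rw [← two_mul, _root_.zpow_mul, neg_one_zpow_two, _root_.one_zpow]

lemma neg_one_zpow_odd (m : ℤ) : ((-1 : SL2Z) ^ (2 * m + 1)) = -1 := by
  rw [_root_.zpow_add, _root_.zpow_mul, neg_one_zpow_two, _root_.one_zpow, one_mul, zpow_one]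

lemma neg_one_smul_UHP (z : ℍ) : ((-1 : SL2Z)) • z = z := by
  simpa using ModularGroup.SL_neg_smul (1 : SL2Z) z

lemma PN_smul (n : SL2Z) (hn : n ∈ PN) (z : ℍ) : n • z = z := by
  obtain ⟨k, rfl⟩ := hn
  show (-1 : SL2Z) ^ k • z = z
  rcases Int.even_or_odd k with ⟨m, rfl⟩ | ⟨m, rfl⟩
  · rw [neg_one_zpow_even]; simp
  · rw [neg_one_zpow_odd]; exact neg_one_smul_UHP z

lemma neg_one_central (h : SL2Z) : Commute (-1 : SL2Z) h := by
  ext i j; simp [Matrix.neg_mul, Matrix.mul_neg]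

instance PN_normal : PN.Normal := by
  constructor
  intro n hn g
  obtain ⟨k, rfl⟩ := hn
  have : Commute ((-1 : SL2Z) ^ k) g := (neg_one_central g).zpow_left k
  show g * (-1 : SL2Z) ^ k * g⁻¹ ∈ PN
  rw [← this.eq]
  group
  exact ⟨k, rfl⟩

abbrev PSL := SL2Z ⧸ PN

noncomputable instance PSLaction : MulAction PSL ℍ where
  smul q z := Quotient.liftOn' q (fun A => A • z)
    (by
      intro A B h
      rw [QuotientGroup.leftRel_apply] at h
      show A • z = B • z
      have hB : B = A * (A⁻¹ * B) := by group
      rw [hB, mul_smul, PN_smul _ h])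
  one_smul z := by
    show (1 : SL2Z) • z = z
    simp
  mul_smul q r z := by
    induction q using Quotient.inductionOn'
    induction r using Quotient.inductionOn'
    rename_i A B
    show (A * B) • z = A • (B • z)
    rw [mul_smul]

noncomputable def pQ : SL2Z →* PSL := QuotientGroup.mk' PN

lemma psl_smul (A : SL2Z) (z : ℍ) : (pQ A) • z = A • z := rfl

end PSLdef

section ReLemmas

lemma sl_smul_coe (A : SL2Z) (z : ℍ) :
    ((A • z : ℍ) : ℂ) =
      ((A.1 0 0 : ℂ) * z + A.1 0 1) / ((A.1 1 0 : ℂ) * z + A.1 1 1) := by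
  rw [UpperHalfPlane.coe_specialLinearGroup_apply]
  simp [UpperHalfPlane.num, UpperHalfPlane.denom]

lemma UHP_ne_zero (z : ℍ) : (z : ℂ) ≠ 0 := by
  intro h
  have := z.im_pos
  rw [UpperHalfPlane.im, h] at this
  simp at this

lemma re_mS_smul (z : ℍ) (hz : 0 < z.re) : (mS • z).re < 0 := by
  have h0 : (z : ℂ) ≠ 0 := UHP_ne_zero z
  have : ((mS • z : ℍ) : ℂ) = -(z : ℂ)⁻¹ := by
    rw [sl_smul_coe]
    simp [mS]
  rw [UpperHalfPlane.re, this]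
  simp [Complex.inv_re]
  exact div_pos hz (Complex.normSq_pos.mpr h0)

lemma re_mY_smul (z : ℍ) (hz : z.re < 0) : 0 < (mY • z).re := by
  have h1 : ((1 : ℂ) - z) ≠ 0 := by
    intro h
    have hz1 : (z : ℂ) = 1 := by linear_combination -h
    have him := z.im_pos
    rw [UpperHalfPlane.im, hz1] at him
    simp at him
  have : ((mY • z : ℍ) : ℂ) = ((1 : ℂ) - z)⁻¹ := by
    rw [sl_smul_coe]
    simp [mY]
    ring_nf
  rw [UpperHalfPlane.re, this, Complex.inv_re]
  apply div_pos
  · simp; linarith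
  · exact Complex.normSq_pos.mpr h1

lemma re_mY2_smul (z : ℍ) (hz : z.re < 0) : 0 < (mY2 • z).re := by
  have h0 : (z : ℂ) ≠ 0 := UHP_ne_zero z
  have : ((mY2 • z : ℍ) : ℂ) = 1 - (z : ℂ)⁻¹ := by
    rw [sl_smul_coe]
    simp [mY2]
    rw [div_eq_iff (neg_ne_zero.mpr h0), sub_mul, one_mul, mul_neg,
      inv_mul_cancel₀ h0]
    ring
  rw [UpperHalfPlane.re, this]
  have h2 : z.re / Complex.normSq (z : ℂ) < 0 :=
    div_neg_of_neg_of_pos hz (Complex.normSq_pos.mpr h0)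
  simp [Complex.inv_re]
  linarith

end ReLemmas

section FreeProd

/-- Hom from `Multiplicative (ZMod n)` sending the generator to an element `g` with `g ^ n = 1`. -/
def homZMod {G : Type*} [Group G] (n : ℕ) [NeZero n] (g : G) (h : g ^ n = 1) :
    Multiplicative (ZMod n) →* G :=
  MonoidHom.mk' (fun x => g ^ x.toAdd.val)
    (by
      have hpow : ∀ m : ℕ, g ^ m = g ^ (m % n) := by
        intro m
        conv_lhs => rw [← Nat.div_add_mod m n]
        rw [pow_add, pow_mul, h, one_pow, one_mul]
      intro x y
      show g ^ (x.toAdd + y.toAdd).val = g ^ x.toAdd.val * g ^ y.toAdd.val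
      rw [ZMod.val_add, ← hpow, pow_add])

abbrev Hf : Bool → Type := fun i => Multiplicative (ZMod (cond i 2 3))

abbrev FP := Monoid.CoprodI Hf

def xF : FP := Monoid.CoprodI.of (M := Hf) (i := true) (Multiplicative.ofAdd (1 : ZMod 2))
def yF : FP := Monoid.CoprodI.of (M := Hf) (i := false) (Multiplicative.ofAdd (1 : ZMod 3))

lemma hxF : xF * xF = 1 := by
  have h : (Multiplicative.ofAdd (1 : ZMod 2) * Multiplicative.ofAdd (1 : ZMod 2) : Hf true)
      = 1 := by decide
  calc xF * xF = Monoid.CoprodI.of (M := Hf) (i := true)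
        (Multiplicative.ofAdd (1 : ZMod 2) * Multiplicative.ofAdd (1 : ZMod 2)) :=
      (MonoidHom.map_mul _ _ _).symm
    _ = 1 := by rw [h, _root_.map_one]

lemma hyF : yF * yF * yF = 1 := by
  have h : (Multiplicative.ofAdd (1 : ZMod 3) * Multiplicative.ofAdd (1 : ZMod 3) *
      Multiplicative.ofAdd (1 : ZMod 3) : Hf false) = 1 := by decide
  calc yF * yF * yF = Monoid.CoprodI.of (M := Hf) (i := false)
        (Multiplicative.ofAdd (1 : ZMod 3) * Multiplicative.ofAdd (1 : ZMod 3)) * yF :=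
      congrArg (· * yF) (MonoidHom.map_mul _ _ _).symm
    _ = Monoid.CoprodI.of (M := Hf) (i := false)
        (Multiplicative.ofAdd (1 : ZMod 3) * Multiplicative.ofAdd (1 : ZMod 3) *
          Multiplicative.ofAdd (1 : ZMod 3)) := (MonoidHom.map_mul _ _ _).symm
    _ = 1 := by rw [h, _root_.map_one]

/-- the general ping-pong homomorphism family -/
def fPP {G : Type*} [Group G] (σ τ : G) (hσ : σ ^ 2 = 1) (hτ : τ ^ 3 = 1) : ∀ i, Hf i →* G :=
  fun i => match i with
  | true => homZMod 2 σ hσ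
  | false => homZMod 3 τ hτ

lemma fPP_x {G : Type*} [Group G] (σ τ : G) (hσ : σ ^ 2 = 1) (hτ : τ ^ 3 = 1) :
    Monoid.CoprodI.lift (fPP σ τ hσ hτ) xF = σ := by
  rw [xF, Monoid.CoprodI.lift_of]
  show σ ^ (1 : ZMod 2).val = σ
  rw [show (1 : ZMod 2).val = 1 from by decide, pow_one]

lemma fPP_y {G : Type*} [Group G] (σ τ : G) (hσ : σ ^ 2 = 1) (hτ : τ ^ 3 = 1) :
    Monoid.CoprodI.lift (fPP σ τ hσ hτ) yF = τ := by
  rw [yF, Monoid.CoprodI.lift_of]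
  show τ ^ (1 : ZMod 3).val = τ
  rw [show (1 : ZMod 3).val = 1 from by decide, pow_one]

end FreeProd

section B3alg

lemma braid : brA * brB * brA = brB * brA * brB := by
  have h : (PresentedGroup.mk braidRels)
      (FreeGroup.of true * FreeGroup.of false * FreeGroup.of true *
        (FreeGroup.of false * FreeGroup.of true * FreeGroup.of false)⁻¹) = 1 := by
    apply (QuotientGroup.eq_one_iff _).mpr
    exact Subgroup.subset_normalClosure rfl
  rw [_root_.map_mul, map_inv] at h
  have := mul_inv_eq_one.mp h
  simpa [brA, brB, PresentedGroup.of, _root_.map_mul] using this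

def brS : B3 := brA * brB * brA
def brT : B3 := brA * brB

lemma sa_eq_bs : brS * brA = brB * brS := by
  show brA * brB * brA * brA = brB * (brA * brB * brA)
  rw [show brB * (brA * brB * brA) = brB * brA * brB * brA by group, ← braid]

lemma sb_eq_as : brS * brB = brA * brS := by
  show brA * brB * brA * brB = brA * (brA * brB * brA)
  rw [show brA * brB * brA * brB = brA * (brB * brA * brB) from by group, ← braid]

lemma brC_eq : brC = brS * brS := by
  show (brA * brB * brA) ^ 2 = brS * brS
  rw [pow_two]; rfl

lemma ca_eq_ac : brC * brA = brA * brC := by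
  rw [brC_eq, mul_assoc, sa_eq_bs, ← mul_assoc, sb_eq_as, mul_assoc]

lemma cb_eq_bc : brC * brB = brB * brC := by
  rw [brC_eq, mul_assoc, sb_eq_as, ← mul_assoc, sa_eq_bs, mul_assoc]

lemma brC_central : ∀ g : B3, Commute brC g := by
  intro g
  have : g ∈ Subgroup.centralizer {brC} := by
    apply PresentedGroup.generated_by
    intro j
    cases j
    · exact Subgroup.mem_centralizer_iff.mpr (by rintro h rfl; exact cb_eq_bc)
    · exact Subgroup.mem_centralizer_iff.mpr (by rintro h rfl; exact ca_eq_ac)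
  exact Subgroup.mem_centralizer_iff.mp this brC rfl

lemma t_cubed : brT ^ 3 = brC := by
  rw [brC_eq]
  show (brA * brB) ^ 3 = brA * brB * brA * (brA * brB * brA)
  rw [show brA * brB * brA * (brA * brB * brA) = brA * brB * brA * (brB * brA * brB) by
    rw [← braid]]
  rw [pow_succ, pow_two]
  group

lemma t_mul_a : brT * brA = brS := rfl

lemma s_mul_tinv : brS * brT⁻¹ = brB := by
  show brA * brB * brA * (brA * brB)⁻¹ = brB
  rw [braid]
  group

/-- The subgroup generated by the central element `brC`. -/
def ZC : Subgroup B3 := Subgroup.zpowers brC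

instance ZC_normal : ZC.Normal := by
  constructor
  intro n hn g
  obtain ⟨k, rfl⟩ := hn
  have : Commute (brC ^ k) g := (brC_central g).zpow_left k
  show g * brC ^ k * g⁻¹ ∈ ZC
  rw [← this.eq]
  group
  exact ⟨k, rfl⟩

end B3alg

section eta

/-- The map `B3 → FP`, `a ↦ y⁻¹x`, `b ↦ xy⁻¹`. -/
def etaFun : Bool → FP := fun i => cond i (yF⁻¹ * xF) (xF * yF⁻¹)

lemma eta_rels : ∀ r ∈ braidRels, FreeGroup.lift etaFun r = 1 := by
  intro r hr
  rw [braidRels, Set.mem_singleton_iff] at hr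
  subst hr
  simp only [_root_.map_mul, map_inv, FreeGroup.lift_apply_of]
  show (yF⁻¹ * xF) * (xF * yF⁻¹) * (yF⁻¹ * xF) *
    ((xF * yF⁻¹) * (yF⁻¹ * xF) * (xF * yF⁻¹))⁻¹ = 1
  have e1 : (yF⁻¹ * xF) * (xF * yF⁻¹) * (yF⁻¹ * xF) = xF := by
    calc (yF⁻¹ * xF) * (xF * yF⁻¹) * (yF⁻¹ * xF)
        = yF⁻¹ * (xF * xF) * (yF⁻¹ * (yF⁻¹ * xF)) := by group
      _ = yF⁻¹ * (yF⁻¹ * (yF⁻¹ * xF)) := by rw [hxF, mul_one]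
      _ = (yF * yF * yF)⁻¹ * xF := by group
      _ = xF := by rw [hyF, inv_one, one_mul]
  have e2 : (xF * yF⁻¹) * (yF⁻¹ * xF) * (xF * yF⁻¹) = xF := by
    calc (xF * yF⁻¹) * (yF⁻¹ * xF) * (xF * yF⁻¹)
        = xF * (yF⁻¹ * yF⁻¹) * (xF * xF) * yF⁻¹ := by group
      _ = xF * (yF⁻¹ * yF⁻¹) * yF⁻¹ := by rw [hxF, mul_one]
      _ = xF * (yF * yF * yF)⁻¹ := by group
      _ = xF := by rw [hyF, inv_one, mul_one]
  rw [e1, e2, mul_inv_cancel]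

/-- `η : B3 →* FP`. -/
def eta : B3 →* FP := PresentedGroup.toGroup eta_rels

lemma eta_a : eta brA = yF⁻¹ * xF := PresentedGroup.toGroup.of eta_rels
lemma eta_b : eta brB = xF * yF⁻¹ := PresentedGroup.toGroup.of eta_rels

end eta

section psi

abbrev QB3 := B3 ⧸ ZC

def mkQ : B3 →* QB3 := QuotientGroup.mk' ZC

lemma mkQ_s_sq : (mkQ brS) ^ 2 = 1 := by
  rw [← _root_.map_pow, pow_two, ← brC_eq]
  exact (QuotientGroup.eq_one_iff _).mpr (Subgroup.mem_zpowers brC)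

lemma mkQ_t_cube : (mkQ brT) ^ 3 = 1 := by
  rw [← _root_.map_pow, t_cubed]
  exact (QuotientGroup.eq_one_iff _).mpr (Subgroup.mem_zpowers brC)

noncomputable def psi : FP →* QB3 := Monoid.CoprodI.lift (fPP (mkQ brS) (mkQ brT) mkQ_s_sq mkQ_t_cube)

lemma psi_eta : psi.comp eta = mkQ := by
  apply PresentedGroup.ext
  intro i
  cases i
  · show psi (eta brB) = mkQ brB
    rw [eta_b, _root_.map_mul, map_inv, psi, fPP_x, fPP_y]
    rw [← map_inv, ← _root_.map_mul, s_mul_tinv]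
  · show psi (eta brA) = mkQ brA
    rw [eta_a, _root_.map_mul, map_inv, psi, fPP_x, fPP_y]
    rw [← map_inv, ← _root_.map_mul,
      show brT⁻¹ * brS = brA from by rw [← t_mul_a]; group]

lemma ker_eta_le : eta.ker ≤ ZC := by
  intro g hg
  have h1 : mkQ g = 1 := by
    rw [← psi_eta]
    show psi (eta g) = 1
    rw [MonoidHom.mem_ker.mp hg, _root_.map_one]
  exact (QuotientGroup.eq_one_iff _).mp h1

end psi

section phi

noncomputable def sigP : PSL := pQ mS
noncomputable def tauP : PSL := pQ mY

lemma sigP_sq : sigP ^ 2 = 1 := by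
  rw [sigP, ← _root_.map_pow, pow_two, hSS]
  exact (QuotientGroup.eq_one_iff _).mpr neg_one_mem_PN

lemma tauP_cube : tauP ^ 3 = 1 := by
  rw [tauP, ← _root_.map_pow, pow_succ, pow_two, hYY, hYYY]
  exact (QuotientGroup.eq_one_iff _).mpr neg_one_mem_PN

noncomputable def phi : FP →* PSL := Monoid.CoprodI.lift (fPP sigP tauP sigP_sq tauP_cube)

def XPP : Bool → Set ℍ := fun i => cond i {z | z.re < 0} {z | 0 < z.re}

lemma phi_injective : Function.Injective phi := by
  apply Monoid.CoprodI.lift_injective_of_ping_pong (fPP sigP tauP sigP_sq tauP_cube) _ XPP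
  · intro i
    cases i
    · exact ⟨⟨⟨1, 1⟩, show (0:ℝ) < 1 by norm_num⟩, show (0:ℝ) < (1:ℝ) by norm_num⟩
    · exact ⟨⟨⟨-1, 1⟩, show (0:ℝ) < 1 by norm_num⟩, show (-1:ℝ) < (0:ℝ) by norm_num⟩
  · intro i j hij
    cases i <;> cases j <;> [skip; skip; skip; skip] <;> first
      | exact absurd rfl hij
      | · show Disjoint (XPP _) (XPP _)
          rw [Set.disjoint_left]
          intro z hz1 hz2
          simp only [XPP, cond, Set.mem_setOf_eq] at hz1 hz2
          exact absurd hz2 (not_lt.2 hz1.le)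
  · intro i j hij h hh
    cases i
    · have h3 : ∀ a : ZMod 3, a = 0 ∨ a = 1 ∨ a = 2 := by decide
      have hne : (h.toAdd : ZMod 3) ≠ 0 := by
        intro h0
        exact hh (by
          have : h = Multiplicative.ofAdd h.toAdd := rfl
          rw [this, h0]; rfl)
      cases j
      · exact absurd rfl hij
      · rintro _ ⟨z, hz, rfl⟩
        have hzre : z.re < 0 := hz
        show (0 : ℝ) < _
        rcases h3 h.toAdd with h0 | h1 | h2
        · exact absurd h0 hne
        · have he : fPP sigP tauP sigP_sq tauP_cube false h = tauP := by
            show tauP ^ h.toAdd.val = tauP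
            rw [h1, show (1 : ZMod 3).val = 1 from by decide, pow_one]
          rw [he, tauP]
          exact re_mY_smul z hzre
        · have he : fPP sigP tauP sigP_sq tauP_cube false h = pQ mY2 := by
            show tauP ^ h.toAdd.val = pQ mY2
            rw [h2, show (2 : ZMod 3).val = 2 from by decide, pow_two, tauP,
              ← _root_.map_mul, hYY]
          rw [he]
          exact re_mY2_smul z hzre
    · have h2 : ∀ a : ZMod 2, a = 0 ∨ a = 1 := by decide
      have hne : (h.toAdd : ZMod 2) ≠ 0 := by
        intro h0
        exact hh (by
          have : h = Multiplicative.ofAdd h.toAdd := rfl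
          rw [this, h0]; rfl)
      cases j
      · rintro _ ⟨z, hz, rfl⟩
        have hzre : (0:ℝ) < z.re := hz
        show _ < (0 : ℝ)
        rcases h2 h.toAdd with h0 | h1
        · exact absurd h0 hne
        · have he : fPP sigP tauP sigP_sq tauP_cube true h = sigP := by
            show sigP ^ h.toAdd.val = sigP
            rw [h1, show (1 : ZMod 2).val = 1 from by decide, pow_one]
          rw [he, sigP]
          exact re_mS_smul z hzre
      · exact absurd rfl hij
  · right
    refine ⟨false, ?_⟩
    show (3 : Cardinal) ≤ Cardinal.mk (Multiplicative (ZMod 3))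
    rw [Cardinal.mk_fintype]
    norm_num

end phi

/-- The kernel of the homomorphism `π : B₃ → SL(2,ℤ)` determined by
`π(𝔞) = u₁₂`, `π(𝔟) = u₂₁` is the subgroup of `B₃` generated by `𝔠²`,
where `𝔠 = (𝔞𝔟𝔞)²`. -/
theorem ker_hom_B3_to_SL2Z (π : B3 →* Matrix.SpecialLinearGroup (Fin 2) ℤ)
    (ha : π brA = u12) (hb : π brB = u21) :
    π.ker = Subgroup.closure {brC ^ 2} := by
  have hπC : π brC = -1 := by
    rw [brC, _root_.map_pow, _root_.map_mul, _root_.map_mul, ha, hb, hS, pow_two, hSS]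
  have hsq : phi.comp eta = pQ.comp π := by
    apply PresentedGroup.ext
    intro i
    cases i
    · show phi (eta brB) = pQ (π brB)
      rw [eta_b, _root_.map_mul, map_inv, phi, fPP_x, fPP_y, hb, sigP, tauP,
        ← map_inv, ← _root_.map_mul]
      congr 1
      rw [← huY]
      group
    · show phi (eta brA) = pQ (π brA)
      rw [eta_a, _root_.map_mul, map_inv, phi, fPP_x, fPP_y, ha, sigP, tauP,
        ← map_inv, ← _root_.map_mul]
      congr 1
      rw [← hYu]
      group
  apply le_antisymm
  · -- ker π ≤ closure {c²}
    intro g hg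
    have hπg : π g = 1 := hg
    have h1 : phi (eta g) = 1 := by
      have := DFunLike.congr_fun hsq g
      simp only [MonoidHom.coe_comp, Function.comp_apply] at this
      rw [this, hπg, _root_.map_one]
    have h2 : eta g = 1 := by
      apply phi_injective
      rw [h1, _root_.map_one]
    obtain ⟨k, hk0⟩ := ker_eta_le (MonoidHom.mem_ker.mpr h2)
    have hk : brC ^ k = g := hk0
    have hπk : ((-1 : SL2Z)) ^ k = 1 := by
      rw [← hπC, ← map_zpow, hk, hπg]
    have hkeven : ∃ m : ℤ, k = m + m := by
      rcases Int.even_or_odd k with ⟨m, hm⟩ | ⟨m, hm⟩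
      · exact ⟨m, hm⟩
      · rw [hm, neg_one_zpow_odd] at hπk
        exact absurd hπk neg_one_ne_one_SL2Z
    obtain ⟨m, rfl⟩ := hkeven
    rw [Subgroup.mem_closure_singleton]
    refine ⟨m, ?_⟩
    rw [← hk, ← zpow_natCast brC 2, ← _root_.zpow_mul]
    rw [show (2 : ℕ) * m = m + m by ring]
  · -- closure {c²} ≤ ker π
    rw [Subgroup.closure_le]
    intro x hx
    rw [Set.mem_singleton_iff] at hx
    subst hx
    show π (brC ^ 2) = 1
    rw [_root_.map_pow, hπC, pow_two, neg_one_mul_self]
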